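/- There exists a constant $C>0$ such that for all $\lambda>0$, $t>0$, $\bar s>0$, and all real $h$ with $0<|h|\le \bar s/2$: $\left| e^{-\lambda^{\bar s + h} t} - e^{-\lambda^{\bar s} t} + h\, t\, \lambda^{\bar s} \ln(\lambda)\, e^{-\lambda^{\bar s} t} \right| \le C\, \frac{h^2}{\bar s^{2}}\left(1 + |\ln t|^2\right)$. -/

import Mathlib

open Real

-- elementary: v^2 * exp (-v) ≤ 4 for v ≥ 0
lemma sq_mul_exp_neg_le (v : ℝ) (hv : 0 ≤ v) : v ^ 2 * Real.exp (-v) ≤ 4 := by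
  have h1 : v / 2 ≤ Real.exp (v / 2) := le_trans (by linarith) (Real.add_one_le_exp _)
  have h2 : (v / 2) ^ 2 ≤ Real.exp (v / 2) ^ 2 := by
    apply pow_le_pow_left₀ (by positivity) h1
  have h3 : Real.exp (v / 2) ^ 2 = Real.exp v := by
    rw [← Real.exp_nat_mul]; congr 1; push_cast; ring
  have h4 : v ^ 2 ≤ 4 * Real.exp v := by nlinarith [h2, h3]
  have h5 : Real.exp (-v) = 1 / Real.exp v := by rw [Real.exp_neg]; ring
  have h6 : 0 < Real.exp v := Real.exp_pos v
  rw [h5, mul_one_div, div_le_iff₀ h6]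
  nlinarith

-- w^4 ≤ 256 * exp w for w ≥ 0
lemma pow4_le_exp (w : ℝ) (hw : 0 ≤ w) : w ^ 4 ≤ 256 * Real.exp w := by
  have h1 : w / 4 ≤ Real.exp (w / 4) := le_trans (by linarith) (Real.add_one_le_exp _)
  have h2 : (w / 4) ^ 4 ≤ Real.exp (w / 4) ^ 4 := pow_le_pow_left₀ (by positivity) h1 4
  have h3 : Real.exp (w / 4) ^ 4 = Real.exp w := by
    rw [← Real.exp_nat_mul]; congr 1; push_cast; ring
  nlinarith [h2, h3]

lemma key_aux (w : ℝ) (hw : 0 < w) :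
    (1 + Real.log w ^ 2) * (w * Real.exp (-w) * (1 + w)) ≤ 1024 := by
  rcases le_or_gt w 1 with h1 | h1
  · -- w ≤ 1
    have hlw : Real.log w ≤ 0 := Real.log_nonpos hw.le h1
    have hv : Real.log w ^ 2 = (-Real.log w) ^ 2 := by ring
    have hexp : Real.exp (-(-Real.log w)) = w := by
      simp [Real.exp_log hw]
    -- w * log w ^ 2 = v^2 exp(-v) with v = -log w
    have h2 : w * Real.log w ^ 2 ≤ 4 := by
      have := sq_mul_exp_neg_le (-Real.log w) (by linarith)
      rw [hexp] at this
      nlinarith [this]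
    have he : Real.exp (-w) ≤ 1 := by
      rw [Real.exp_le_one_iff]; linarith
    have hepos : 0 < Real.exp (-w) := Real.exp_pos _
    have hlsq : 0 ≤ Real.log w ^ 2 := sq_nonneg _
    have h7 : Real.exp (-w) * (1 + w) ≤ 2 := by nlinarith
    have h8 : 0 ≤ Real.exp (-w) * (1 + w) := by positivity
    have h9 : (1 + Real.log w ^ 2) * (w * Real.exp (-w) * (1 + w))
        = (w + w * Real.log w ^ 2) * (Real.exp (-w) * (1 + w)) := by ring
    rw [h9]
    have h10 : w + w * Real.log w ^ 2 ≤ 5 := by nlinarith [mul_nonneg hw.le hlsq]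
    nlinarith [mul_nonneg hw.le hlsq]
  · -- 1 < w
    have hl0 : 0 ≤ Real.log w := Real.log_nonneg h1.le
    have hlw : Real.log w ≤ w := le_trans (Real.log_le_sub_one_of_pos hw) (by linarith)
    have hl2 : Real.log w ^ 2 ≤ w ^ 2 := by nlinarith
    have hepos : 0 < Real.exp (-w) := Real.exp_pos _
    have h4 : (1 + Real.log w ^ 2) * (w * Real.exp (-w) * (1 + w)) ≤
        (1 + w ^ 2) * (w * Real.exp (-w) * (1 + w)) := by
      have : 0 ≤ w * Real.exp (-w) * (1 + w) := by positivity
      nlinarith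
    have hw2 : w ≤ w ^ 2 := by nlinarith
    have hw3 : w ^ 2 ≤ w ^ 3 := by nlinarith
    have hw4 : w ^ 3 ≤ w ^ 4 := by nlinarith
    have h5 : (1 + w ^ 2) * (w * (1 + w)) ≤ 4 * w ^ 4 := by nlinarith
    have h6 : w ^ 4 * Real.exp (-w) ≤ 256 := by
      have := pow4_le_exp w hw.le
      have hew : 0 < Real.exp w := Real.exp_pos w
      rw [Real.exp_neg]
      rw [mul_inv_le_iff₀ hew]
      linarith
    calc (1 + Real.log w ^ 2) * (w * Real.exp (-w) * (1 + w))
        ≤ (1 + w ^ 2) * (w * Real.exp (-w) * (1 + w)) := h4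
      _ = (1 + w ^ 2) * (w * (1 + w)) * Real.exp (-w) := by ring
      _ ≤ 4 * w ^ 4 * Real.exp (-w) := by nlinarith
      _ ≤ 4 * 256 := by nlinarith
      _ ≤ 1024 := by norm_num

lemma deriv2_bound (lam t sbar s : ℝ) (hlam : 0 < lam) (ht : 0 < t) (hs : 0 < sbar)
    (hs1 : sbar / 2 ≤ s) :
    |Real.exp (-(lam ^ s) * t) * (Real.log lam ^ 2 * t * lam ^ s * (t * lam ^ s - 1))|
      ≤ 8192 / sbar ^ 2 * (1 + Real.log t ^ 2) := by
  set L := Real.log lam with hL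
  have hls : (0:ℝ) < lam ^ s := Real.rpow_pos_of_pos hlam s
  set w : ℝ := lam ^ s * t with hw
  have hw0 : 0 < w := mul_pos hls ht
  have hlogw : Real.log w = s * L + Real.log t := by
    rw [hw, Real.log_mul (ne_of_gt hls) (ne_of_gt ht), Real.log_rpow hlam]
  -- bound on |L|
  have hsL : (sbar / 2) * |L| ≤ |Real.log w| + |Real.log t| := by
    have h1 : |s * L| ≤ |Real.log w| + |Real.log t| := by
      have : s * L = Real.log w - Real.log t := by rw [hlogw]; ring
      rw [this]
      exact abs_sub _ _
    have h2 : (sbar / 2) * |L| ≤ s * |L| := by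
      apply mul_le_mul_of_nonneg_right hs1 (abs_nonneg _)
    have h3 : s * |L| = |s * L| := by
      rw [abs_mul, abs_of_nonneg (by linarith : (0:ℝ) ≤ s)]
    linarith [h3 ▸ h2]
  have hL2 : L ^ 2 ≤ 8 / sbar ^ 2 * ((1 + Real.log w ^ 2) * (1 + Real.log t ^ 2)) := by
    have h4 : (sbar / 2) ^ 2 * L ^ 2 ≤ (|Real.log w| + |Real.log t|) ^ 2 := by
      have := mul_self_le_mul_self (by positivity) hsL
      calc (sbar / 2) ^ 2 * L ^ 2 = ((sbar / 2) * |L|) * ((sbar / 2) * |L|) := by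
            have := abs_mul_abs_self L
            nlinarith [this]
        _ ≤ (|Real.log w| + |Real.log t|) * (|Real.log w| + |Real.log t|) := this
        _ = (|Real.log w| + |Real.log t|) ^ 2 := by ring
    have h5 : (|Real.log w| + |Real.log t|) ^ 2 ≤ 2 * (Real.log w ^ 2 + Real.log t ^ 2) := by
      have := sq_nonneg (|Real.log w| - |Real.log t|)
      have e1 : |Real.log w| ^ 2 = Real.log w ^ 2 := sq_abs _
      have e2 : |Real.log t| ^ 2 = Real.log t ^ 2 := sq_abs _
      nlinarith [e1, e2]
    have h6 : 2 * (Real.log w ^ 2 + Real.log t ^ 2) ≤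
        2 * ((1 + Real.log w ^ 2) * (1 + Real.log t ^ 2)) := by
      nlinarith [sq_nonneg (Real.log w), sq_nonneg (Real.log t),
        mul_nonneg (sq_nonneg (Real.log w)) (sq_nonneg (Real.log t))]
    have hsb2 : (0:ℝ) < sbar ^ 2 := by positivity
    rw [div_mul_eq_mul_div, le_div_iff₀ hsb2]
    nlinarith [h4, h5, h6]
  -- rewrite the expression in terms of w
  have hexp : Real.exp (-(lam ^ s) * t) = Real.exp (-w) := by rw [hw]; ring_nf
  have key : |Real.exp (-(lam ^ s) * t) * (L ^ 2 * t * lam ^ s * (t * lam ^ s - 1))|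
      ≤ L ^ 2 * (w * Real.exp (-w) * (1 + w)) := by
    rw [hexp, abs_mul, abs_mul]
    have e3 : |L ^ 2 * t * lam ^ s| = L ^ 2 * w := by
      rw [abs_of_nonneg (by positivity : (0:ℝ) ≤ L ^ 2 * t * lam ^ s)]
      rw [hw]; ring
    rw [e3, abs_of_nonneg (Real.exp_pos _).le]
    have e4 : |t * lam ^ s - 1| ≤ 1 + w := by
      rw [hw]
      have : 0 < t * lam ^ s := mul_pos ht hls
      rw [abs_sub_le_iff]
      constructor <;> nlinarith
    calc Real.exp (-w) * (L ^ 2 * w * |t * lam ^ s - 1|)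
        ≤ Real.exp (-w) * (L ^ 2 * w * (1 + w)) := by
          apply mul_le_mul_of_nonneg_left _ (Real.exp_pos _).le
          apply mul_le_mul_of_nonneg_left e4 (by positivity)
      _ = L ^ 2 * (w * Real.exp (-w) * (1 + w)) := by ring
  have hKA := key_aux w hw0
  calc |Real.exp (-(lam ^ s) * t) * (L ^ 2 * t * lam ^ s * (t * lam ^ s - 1))|
      ≤ L ^ 2 * (w * Real.exp (-w) * (1 + w)) := key
    _ ≤ 8 / sbar ^ 2 * ((1 + Real.log w ^ 2) * (1 + Real.log t ^ 2)) *
        (w * Real.exp (-w) * (1 + w)) := by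
        apply mul_le_mul_of_nonneg_right hL2 (by positivity)
    _ = 8 / sbar ^ 2 * (1 + Real.log t ^ 2) *
        ((1 + Real.log w ^ 2) * (w * Real.exp (-w) * (1 + w))) := by ring
    _ ≤ 8 / sbar ^ 2 * (1 + Real.log t ^ 2) * 1024 := by
        apply mul_le_mul_of_nonneg_left hKA (by positivity)
    _ = 8192 / sbar ^ 2 * (1 + Real.log t ^ 2) := by ring

lemma hF (lam t : ℝ) (hlam : 0 < lam) (s : ℝ) :
    HasDerivAt (fun s => Real.exp (-(lam ^ s) * t))
      (Real.exp (-(lam ^ s) * t) * (-(lam ^ s * Real.log lam) * t)) s := by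
  have h1 : HasDerivAt (fun s : ℝ => lam ^ s) (lam ^ s * Real.log lam) s :=
    (Real.hasStrictDerivAt_const_rpow hlam s).hasDerivAt
  have h2 : HasDerivAt (fun s : ℝ => -(lam ^ s) * t) (-(lam ^ s * Real.log lam) * t) s :=
    h1.neg.mul_const t
  exact h2.exp

lemma hF' (lam t : ℝ) (hlam : 0 < lam) (s : ℝ) :
    HasDerivAt (fun s => Real.exp (-(lam ^ s) * t) * (-(lam ^ s * Real.log lam) * t))
      (Real.exp (-(lam ^ s) * t) *
        (Real.log lam ^ 2 * t * lam ^ s * (t * lam ^ s - 1))) s := by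
  have h1 : HasDerivAt (fun s : ℝ => lam ^ s) (lam ^ s * Real.log lam) s :=
    (Real.hasStrictDerivAt_const_rpow hlam s).hasDerivAt
  have h2 : HasDerivAt (fun s : ℝ => -(lam ^ s * Real.log lam) * t)
      (-(lam ^ s * Real.log lam * Real.log lam) * t) s :=
    (h1.mul_const (Real.log lam)).neg.mul_const t
  have h3 := (hF lam t hlam s).mul h2
  exact h3.congr_deriv (by ring)

/-- Uniform first-order Taylor remainder bound for `E_{λ,t}(s) = e^{-λ^s t}` in `s`:
for `0 < |h| ≤ s̄/2`,
`|e^{-λ^{s̄+h} t} - e^{-λ^{s̄} t} + h t λ^{s̄} ln(λ) e^{-λ^{s̄} t}| ≤ C h²/s̄² (1 + |ln t|²)`. -/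
theorem stmt13 :
    ∃ C : ℝ, 0 < C ∧
      ∀ lam t sbar h : ℝ, 0 < lam → 0 < t → 0 < sbar → h ≠ 0 → |h| ≤ sbar / 2 →
        |Real.exp (-(lam ^ (sbar + h)) * t) - Real.exp (-(lam ^ sbar) * t)
            + h * t * lam ^ sbar * Real.log lam * Real.exp (-(lam ^ sbar) * t)|
          ≤ C * h ^ 2 / sbar ^ 2 * (1 + |Real.log t| ^ 2) := by
  refine ⟨8192, by norm_num, fun lam t sbar h hlam ht hs hh0 hhs => ?_⟩
  set L := Real.log lam with hLdef
  set M : ℝ := 8192 / sbar ^ 2 * (1 + Real.log t ^ 2) with hMdef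
  have hM0 : 0 ≤ M := by positivity
  set F' : ℝ → ℝ := fun s => Real.exp (-(lam ^ s) * t) * (-(lam ^ s * L) * t) with hF'def
  set I : Set ℝ := Set.Icc (sbar / 2) (sbar + |h|) with hIdef
  have habs : 0 < |h| := abs_pos.mpr hh0
  -- inner Lipschitz bound for F'
  have inner : ∀ a ∈ I, ∀ b ∈ I, |F' a - F' b| ≤ M * |a - b| := by
    intro a ha b hb
    have := Convex.norm_image_sub_le_of_norm_hasDerivWithin_le
      (f := F') (f' := fun s => Real.exp (-(lam ^ s) * t) * (L ^ 2 * t * lam ^ s * (t * lam ^ s - 1)))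
      (s := I) (C := M)
      (fun x _ => (hF' lam t hlam x).hasDerivWithinAt)
      (fun x hx => by
        have hx1 : sbar / 2 ≤ x := hx.1
        simpa only [Real.norm_eq_abs] using deriv2_bound lam t sbar x hlam ht hs hx1)
      (convex_Icc _ _) hb ha
    simpa [Real.norm_eq_abs] using this
  -- outer function g
  set g : ℝ → ℝ := fun x => Real.exp (-(lam ^ (sbar + x)) * t) - x * F' sbar with hgdef
  have hmem : ∀ x ∈ Set.uIcc (0:ℝ) h, sbar + x ∈ I := by
    intro x hx
    rw [Set.mem_uIcc] at hx
    refine Set.mem_Icc.mpr ⟨?_, ?_⟩ <;>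
      rcases abs_cases h with ⟨e1, e2⟩ | ⟨e1, e2⟩ <;> rcases hx with ⟨h1, h2⟩ | ⟨h1, h2⟩ <;> linarith
  have hsbarmem : sbar ∈ I := ⟨by linarith, by linarith⟩
  have hgderiv : ∀ x ∈ Set.uIcc (0:ℝ) h,
      HasDerivWithinAt g (F' (sbar + x) - F' sbar) (Set.uIcc (0:ℝ) h) x := by
    intro x hx
    have h1 : HasDerivAt (fun x : ℝ => sbar + x) 1 x := (hasDerivAt_id x).const_add sbar
    have h2 : HasDerivAt (fun x : ℝ => Real.exp (-(lam ^ (sbar + x)) * t))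
        (F' (sbar + x)) x := by
      have h0 := (hF lam t hlam (sbar + x)).comp x h1
      exact h0.congr_deriv (by simp [hF'def, hLdef])
    have h3 : HasDerivAt g (F' (sbar + x) - F' sbar) x := by
      have h4 := h2.sub ((hasDerivAt_id x).mul_const (F' sbar))
      exact h4.congr_deriv (by simp)
    exact h3.hasDerivWithinAt
  have hgbound : ∀ x ∈ Set.uIcc (0:ℝ) h, ‖F' (sbar + x) - F' sbar‖ ≤ M * |h| := by
    intro x hx
    have h1 := inner (sbar + x) (hmem x hx) sbar hsbarmem
    have h2 : |sbar + x - sbar| ≤ |h| := by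
      rw [Set.mem_uIcc] at hx
      rcases abs_cases h with ⟨e1, e2⟩ | ⟨e1, e2⟩ <;>
        rcases hx with ⟨ha, hb⟩ | ⟨ha, hb⟩ <;> rw [abs_le] <;> constructor <;> simp <;> linarith
    rw [Real.norm_eq_abs]
    calc |F' (sbar + x) - F' sbar| ≤ M * |sbar + x - sbar| := h1
      _ ≤ M * |h| := mul_le_mul_of_nonneg_left h2 hM0
  have main := Convex.norm_image_sub_le_of_norm_hasDerivWithin_le
    (f := g) (f' := fun x => F' (sbar + x) - F' sbar) (s := Set.uIcc (0:ℝ) h) (C := M * |h|)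
    hgderiv hgbound (convex_uIcc _ _) Set.left_mem_uIcc Set.right_mem_uIcc
  have heq : g h - g 0 =
      Real.exp (-(lam ^ (sbar + h)) * t) - Real.exp (-(lam ^ sbar) * t)
        + h * t * lam ^ sbar * L * Real.exp (-(lam ^ sbar) * t) := by
    simp only [hgdef, hF'def]
    ring_nf
  rw [Real.norm_eq_abs, Real.norm_eq_abs, heq, sub_zero] at main
  calc |Real.exp (-(lam ^ (sbar + h)) * t) - Real.exp (-(lam ^ sbar) * t)
        + h * t * lam ^ sbar * L * Real.exp (-(lam ^ sbar) * t)|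
      ≤ M * |h| * |h| := main
    _ = 8192 * h ^ 2 / sbar ^ 2 * (1 + |Real.log t| ^ 2) := by
        rw [hMdef, sq_abs,
          show 8192 / sbar ^ 2 * (1 + Real.log t ^ 2) * |h| * |h|
              = 8192 / sbar ^ 2 * (1 + Real.log t ^ 2) * (|h| * |h|) from by ring,
          abs_mul_abs_self]
        ring
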